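/- arXiv:1604.07381 — 2 statements merged into one kernel-verified Lean document; each statement's English description precedes it below -/
import Mathlib

section
/- Let m ≥ 2, n ≥ 1, x₁, …, x_m ∈ (0,1), and x̄ = (x₁ + ⋯ + x_m)/m. Then for every convex f : ℝ → ℝ, ∑_{k=0}^{mn} C(mn,k)·x̄^k·(1−x̄)^{mn−k}·f(k) ≤ (1/m)·∑_{i=1}^{m} ∑_{k=0}^{mn} C(mn,k)·x_i^k·(1−x_i)^{mn−k}·f(k). That is, B(mn, x̄) ≤_cx the mixture (1/m)·∑_{i=1}^m B(mn, x_i). -/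
open Finset

noncomputable def binG (h : ℕ → ℝ) (M : ℕ) (p : ℝ) : ℝ :=
  ∑ k ∈ range (M + 1), (M.choose k : ℝ) * p ^ k * (1 - p) ^ (M - k) * h k

lemma binG_hasDerivAt (h : ℕ → ℝ) (M : ℕ) (p : ℝ) :
    HasDerivAt (binG h (M + 1))
      ((M + 1 : ℝ) * binG (fun k => h (k + 1) - h k) M p) p := by
  have H : ∀ k ∈ range (M + 2),
      HasDerivAt (fun q => (((M + 1).choose k : ℝ)) * q ^ k * (1 - q) ^ (M + 1 - k) * h k)
        ((((M + 1).choose k : ℝ)) * h k *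
          ((k : ℝ) * p ^ (k - 1) * (1 - p) ^ (M + 1 - k)
            - ((M + 1 - k : ℕ) : ℝ) * p ^ k * (1 - p) ^ (M - k))) p := by
    intro k _
    have d1 : HasDerivAt (fun q : ℝ => q ^ k) ((k : ℝ) * p ^ (k - 1)) p := hasDerivAt_pow k p
    have d2 : HasDerivAt (fun q : ℝ => (1 - q) ^ (M + 1 - k))
        (((M + 1 - k : ℕ) : ℝ) * (1 - p) ^ (M + 1 - k - 1) * (-1)) p := by
      have dlin : HasDerivAt (fun q : ℝ => 1 - q) (-1) p := by
        simpa using (hasDerivAt_const p (1:ℝ)).fun_sub (hasDerivAt_id p)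
      exact (hasDerivAt_pow (M + 1 - k) (1 - p)).comp p dlin
    have hsub : M + 1 - k - 1 = M - k := by omega
    rw [hsub] at d2
    have := ((d1.const_mul (((M + 1).choose k : ℝ))).fun_mul d2).mul_const (h k)
    convert! this using 1
    ring
  have hs := HasDerivAt.fun_sum H
  have hfun : binG h (M + 1) = fun p => ∑ k ∈ range (M + 2),
      (((M + 1).choose k : ℝ)) * p ^ k * (1 - p) ^ (M + 1 - k) * h k := rfl
  rw [hfun]
  convert! hs using 1
  -- algebraic identity for the derivative
  have split : ∑ k ∈ range (M + 2),
      (((M + 1).choose k : ℝ)) * h k *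
        ((k : ℝ) * p ^ (k - 1) * (1 - p) ^ (M + 1 - k)
          - ((M + 1 - k : ℕ) : ℝ) * p ^ k * (1 - p) ^ (M - k))
      = (∑ k ∈ range (M + 2), (((M + 1).choose k : ℝ)) * h k *
          ((k : ℝ) * p ^ (k - 1) * (1 - p) ^ (M + 1 - k)))
        - ∑ k ∈ range (M + 2), (((M + 1).choose k : ℝ)) * h k *
          (((M + 1 - k : ℕ) : ℝ) * p ^ k * (1 - p) ^ (M - k)) := by
    rw [← Finset.sum_sub_distrib]; apply Finset.sum_congr rfl; intro k _; ring
  rw [split]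
  have hA : ∑ k ∈ range (M + 2), (((M + 1).choose k : ℝ)) * h k *
      ((k : ℝ) * p ^ (k - 1) * (1 - p) ^ (M + 1 - k))
      = ∑ k ∈ range (M + 1), (M + 1 : ℝ) * (M.choose k : ℝ) * h (k + 1) *
          (p ^ k * (1 - p) ^ (M - k)) := by
    rw [Finset.sum_range_succ']
    simp only [Nat.cast_zero, zero_mul, mul_zero, add_zero, pow_zero]
    apply Finset.sum_congr rfl
    intro k _
    have hc : ((M + 1).choose (k + 1) : ℝ) * (k + 1 : ℕ) = (M + 1 : ℝ) * (M.choose k : ℝ) := by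
      rw [← Nat.cast_mul, ← Nat.add_one_mul_choose_eq, Nat.cast_mul]
      push_cast; ring
    have he : M + 1 - (k + 1) = M - k := by omega
    rw [he]
    have : ((k + 1 : ℕ) : ℝ) = (k : ℝ) + 1 := by push_cast; ring
    rw [show (k + 1) - 1 = k from rfl]
    calc ((M + 1).choose (k + 1) : ℝ) * h (k + 1) *
          (((k + 1 : ℕ) : ℝ) * p ^ k * (1 - p) ^ (M - k))
        = (((M + 1).choose (k + 1) : ℝ) * ((k + 1 : ℕ) : ℝ)) * h (k + 1) *
          (p ^ k * (1 - p) ^ (M - k)) := by push_cast; ring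
      _ = _ := by rw [hc]
  have hB : ∑ k ∈ range (M + 2), (((M + 1).choose k : ℝ)) * h k *
      (((M + 1 - k : ℕ) : ℝ) * p ^ k * (1 - p) ^ (M - k))
      = ∑ k ∈ range (M + 1), (M + 1 : ℝ) * (M.choose k : ℝ) * h k *
          (p ^ k * (1 - p) ^ (M - k)) := by
    rw [Finset.sum_range_succ]
    simp only [Nat.sub_self, Nat.cast_zero, zero_mul, mul_zero, add_zero]
    apply Finset.sum_congr rfl
    intro k hk
    have hk' : k ≤ M := by simpa using Nat.lt_succ_iff.mp (Finset.mem_range.mp hk)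
    have hc : ((M + 1).choose k : ℝ) * ((M + 1 - k : ℕ) : ℝ) = (M + 1 : ℝ) * (M.choose k : ℝ) := by
      rw [← Nat.cast_mul, ← Nat.choose_mul_succ_eq, Nat.cast_mul]
      push_cast; ring
    calc ((M + 1).choose k : ℝ) * h k * (((M + 1 - k : ℕ) : ℝ) * p ^ k * (1 - p) ^ (M - k))
        = (((M + 1).choose k : ℝ) * ((M + 1 - k : ℕ) : ℝ)) * h k *
          (p ^ k * (1 - p) ^ (M - k)) := by ring
      _ = _ := by rw [hc]
  rw [hA, hB, binG, Finset.mul_sum, ← Finset.sum_sub_distrib]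
  apply Finset.sum_congr rfl
  intro k _
  ring


lemma binG_convexOn (h : ℕ → ℝ) (M : ℕ)
    (hh : ∀ k, 0 ≤ h (k + 2) - 2 * h (k + 1) + h k) :
    ConvexOn ℝ (Set.Icc (0:ℝ) 1) (binG h (M + 2)) := by
  have hd1 : ∀ p : ℝ, HasDerivAt (binG h (M + 2))
      (((M : ℝ) + 2) * binG (fun k => h (k + 1) - h k) (M + 1) p) p := by
    intro p
    have := binG_hasDerivAt h (M + 1) p
    convert this using 2 <;> push_cast <;> ring
  have hderiv : deriv (binG h (M + 2))
      = fun p => ((M : ℝ) + 2) * binG (fun k => h (k + 1) - h k) (M + 1) p :=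
    funext fun p => (hd1 p).deriv
  have hd2 : ∀ p : ℝ, HasDerivAt
      (fun p => ((M : ℝ) + 2) * binG (fun k => h (k + 1) - h k) (M + 1) p)
      (((M : ℝ) + 2) * (((M : ℝ) + 1) *
        binG (fun k => (h (k + 2) - h (k + 1)) - (h (k + 1) - h k)) M p)) p := by
    intro p
    exact (binG_hasDerivAt (fun k => h (k + 1) - h k) M p).const_mul ((M : ℝ) + 2)
  apply convexOn_of_deriv2_nonneg' (convex_Icc 0 1)
  · exact fun p _ => (hd1 p).differentiableAt.differentiableWithinAt
  · rw [hderiv]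
    exact fun p _ => (hd2 p).differentiableAt.differentiableWithinAt
  · intro p hp
    have : deriv^[2] (binG h (M + 2)) p = deriv (deriv (binG h (M + 2))) p := by
      simp [Function.iterate_succ_apply']
    rw [this, hderiv, (hd2 p).deriv]
    have h1 : (0:ℝ) ≤ (M : ℝ) + 2 := by positivity
    have h2 : (0:ℝ) ≤ (M : ℝ) + 1 := by positivity
    refine mul_nonneg h1 (mul_nonneg h2 ?_)
    apply Finset.sum_nonneg
    intro k _
    have hk2 := hh k
    have hp0 : (0:ℝ) ≤ p := hp.1
    have hp1 : (0:ℝ) ≤ 1 - p := by linarith [hp.2]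
    have : (0:ℝ) ≤ h (k + 2) - h (k + 1) - (h (k + 1) - h k) := by linarith
    positivity

/-- Proposition 3 (ii): `B(mn, x̄) ≤_cx (1/m) ∑ᵢ B(mn, xᵢ)`. -/
theorem binomial_mean_cx_mixture (m n : ℕ) (hm : 2 ≤ m) (hn : 1 ≤ n)
    (x : Fin m → ℝ) (hx : ∀ i, x i ∈ Set.Ioo (0:ℝ) 1)
    (f : ℝ → ℝ) (hf : ConvexOn ℝ Set.univ f) :
    ∑ k ∈ range (m * n + 1),
        ((m * n).choose k : ℝ) * ((∑ i, x i) / m) ^ k *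
          (1 - (∑ i, x i) / m) ^ (m * n - k) * f k
      ≤ (1 / m) * ∑ i, ∑ k ∈ range (m * n + 1),
          ((m * n).choose k : ℝ) * (x i) ^ k * (1 - x i) ^ (m * n - k) * f k := by
  have hN2 : 2 ≤ m * n := le_trans hm (Nat.le_mul_of_pos_right m hn)
  obtain ⟨M, hM⟩ : ∃ M, m * n = M + 2 := ⟨m * n - 2, by omega⟩
  set h : ℕ → ℝ := fun k => f k with hh_def
  have hh : ∀ k, 0 ≤ h (k + 2) - 2 * h (k + 1) + h k := by
    intro k
    have := hf.2 (Set.mem_univ ((k : ℝ))) (Set.mem_univ ((k : ℝ) + 2))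
      (by norm_num : (0:ℝ) ≤ 1/2) (by norm_num : (0:ℝ) ≤ 1/2) (by norm_num)
    simp only [smul_eq_mul] at this
    have he : (1/2 : ℝ) * (k : ℝ) + (1/2 : ℝ) * ((k : ℝ) + 2) = (k : ℝ) + 1 := by ring
    rw [he] at this
    simp only [hh_def]
    push_cast
    linarith
  have hconv : ConvexOn ℝ (Set.Icc (0:ℝ) 1) (binG h (m * n)) := by
    rw [hM]; exact binG_convexOn h M hh
  have hm0 : (m : ℝ) ≠ 0 := by positivity
  have jensen := hconv.map_sum_le (t := Finset.univ) (w := fun _ : Fin m => 1 / (m : ℝ))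
    (p := x) (fun i _ => by positivity)
    (by simp [Finset.sum_const, Finset.card_univ]; field_simp)
    (fun i _ => Set.mem_Icc.mpr ⟨le_of_lt (hx i).1, le_of_lt (hx i).2⟩)
  have he1 : ∑ i, (1 / (m : ℝ)) • x i = (∑ i, x i) / m := by
    simp only [smul_eq_mul]
    rw [Finset.sum_div]
    apply Finset.sum_congr rfl
    intro i _; ring
  rw [he1] at jensen
  calc ∑ k ∈ range (m * n + 1),
        ((m * n).choose k : ℝ) * ((∑ i, x i) / m) ^ k *
          (1 - (∑ i, x i) / m) ^ (m * n - k) * f k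
      = binG h (m * n) ((∑ i, x i) / m) := rfl
    _ ≤ ∑ i, (1 / (m : ℝ)) • binG h (m * n) (x i) := jensen
    _ = (1 / m) * ∑ i, ∑ k ∈ range (m * n + 1),
          ((m * n).choose k : ℝ) * (x i) ^ k * (1 - x i) ^ (m * n - k) * f k := by
        simp only [smul_eq_mul, binG]
        rw [Finset.mul_sum]
end

section
/- Let m ≥ 2, n ≥ 1. For every convex continuous function f : [0,1] → ℝ and all x₁, …, x_m ∈ [0,1], ∑_{i₁,…,i_m = 0}^{n} (b_{n,i₁}(x₁)⋯b_{n,i_m}(x₁) + ⋯ + b_{n,i₁}(x_m)⋯b_{n,i_m}(x_m) − m·b_{n,i₁}(x₁)·b_{n,i₂}(x₂)⋯b_{n,i_m}(x_m)) · f((i₁+⋯+i_m)/(mn)) ≥ 0. -/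
open Finset

/-- Bernstein fundamental polynomial `b_{n,i}(x)`. -/
def bern (n i : ℕ) (x : ℝ) : ℝ := (n.choose i : ℝ) * x ^ i * (1 - x) ^ (n - i)

lemma bern_nonneg {n i : ℕ} {t : ℝ} (ht : t ∈ Set.Icc (0:ℝ) 1) : 0 ≤ bern n i t := by
  obtain ⟨h0, h1⟩ := ht
  have : (0:ℝ) ≤ 1 - t := by linarith
  unfold bern
  positivity

lemma bern_sum (n : ℕ) (t : ℝ) : ∑ k ∈ range (n + 1), bern n k t = 1 := by
  have h := add_pow t (1 - t) n
  have h2 : t + (1 - t) = 1 := by ring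
  rw [h2, one_pow] at h
  rw [h]
  exact Finset.sum_congr rfl fun k _ => by unfold bern; ring

-- derivative of bern n (j+1)
lemma bern_hasDeriv_succ {n j : ℕ} (hj : j + 1 < n) (t : ℝ) :
    HasDerivAt (fun t => bern n (j+1) t)
      ((n:ℝ) * (bern (n-1) j t - bern (n-1) (j+1) t)) t := by
  have e1 : n - 1 - j = n - j - 1 := by omega
  have e2 : n - 1 - (j + 1) = n - j - 2 := by omega
  have e3 : n - (j+1) = n - j - 1 := by omega
  have h1 : HasDerivAt (fun t : ℝ => (1 - t) ^ (n - j - 1))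
      (((n - j - 1 : ℕ) : ℝ) * (1 - t) ^ (n - j - 2) * (-1)) t := by
    have hbase : HasDerivAt (fun t : ℝ => 1 - t) (-1) t := by
      simpa using (hasDerivAt_id t).const_sub 1
    have := hbase.pow (n - j - 1)
    have e4 : n - j - 1 - 1 = n - j - 2 := by omega
    rw [e4] at this
    exact this
  have h2 : HasDerivAt (fun t : ℝ => t ^ (j + 1)) (((j:ℝ) + 1) * t ^ j) t := by
    have := hasDerivAt_pow (j+1) t
    simpa using this
  have h3 : HasDerivAt (fun t : ℝ => (n.choose (j+1) : ℝ) * (t ^ (j+1) * (1 - t) ^ (n - j - 1))) _ t :=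
    (h2.mul h1).const_mul ((n.choose (j+1) : ℝ))
  have hfun : (fun t : ℝ => (n.choose (j+1) : ℝ) * (t ^ (j+1) * (1 - t) ^ (n - j - 1)))
      = fun t => bern n (j+1) t := by
    funext s; unfold bern; rw [e3]; ring
  rw [hfun] at h3
  convert h3 using 1
  unfold bern
  rw [e1, e2]
  have id1 : ((j:ℝ) + 1) * (n.choose (j+1) : ℝ) = (n:ℝ) * ((n-1).choose j : ℝ) := by
    have h := Nat.add_one_mul_choose_eq (n-1) j
    have hn1 : n - 1 + 1 = n := by omega
    simp only [Nat.succ_eq_add_one, hn1] at h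
    have := congrArg (fun k : ℕ => (k : ℝ)) h
    push_cast at this
    linarith [this]
  have id2 : ((n - j - 1 : ℕ) : ℝ) * (n.choose (j+1) : ℝ)
      = (n:ℝ) * ((n-1).choose (j+1) : ℝ) := by
    have h := Nat.choose_mul_succ_eq (n-1) (j+1)
    have hn1 : n - 1 + 1 = n := by omega
    rw [hn1] at h
    have he : n - (j + 1) = n - j - 1 := by omega
    rw [he] at h
    have := congrArg (fun k : ℕ => (k : ℝ)) h
    push_cast [Nat.cast_sub] at this ⊢
    nlinarith [this]
  linear_combination (t ^ (j+1) * (1 - t) ^ (n - j - 2)) * id2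
    - (t ^ j * (1 - t) ^ (n - j - 1)) * id1

lemma partialSum_hasDeriv {n k : ℕ} (hk : k < n) (t : ℝ) :
    HasDerivAt (fun t => ∑ j ∈ range (k + 1), bern n j t)
      (-((n:ℝ) * bern (n-1) k t)) t := by
  induction k with
  | zero =>
    have hfun : (fun t : ℝ => ∑ j ∈ range 1, bern n j t) = fun t : ℝ => (1 - t) ^ n := by
      funext s
      simp [bern]
    rw [hfun]
    have hbase : HasDerivAt (fun t : ℝ => 1 - t) (-1) t := by
      simpa using (hasDerivAt_id t).const_sub 1
    have h : HasDerivAt (fun t : ℝ => (1 - t) ^ n) _ t := hbase.pow n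
    have : bern (n-1) 0 t = (1 - t) ^ (n - 1) := by simp [bern]
    rw [this]
    convert h using 1
    ring
  | succ k ih =>
    have hk' : k < n := by omega
    have h1 := ih hk'
    have h2 := bern_hasDeriv_succ hk t
    have hfun : (fun t : ℝ => ∑ j ∈ range (k + 2), bern n j t)
        = fun t : ℝ => (∑ j ∈ range (k + 1), bern n j t) + bern n (k+1) t := by
      funext s
      rw [Finset.sum_range_succ]
    rw [hfun]
    have h3 : HasDerivAt (fun t : ℝ => (∑ j ∈ range (k + 1), bern n j t) + bern n (k+1) t) _ t :=
      h1.add h2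
    convert h3 using 1
    ring

lemma partialSum_antitone {n k : ℕ} (hk : k < n) :
    AntitoneOn (fun t => ∑ j ∈ range (k + 1), bern n j t) (Set.Icc (0:ℝ) 1) := by
  apply antitoneOn_of_deriv_nonpos (convex_Icc 0 1)
  · exact fun t _ => ((partialSum_hasDeriv hk t).differentiableAt).continuousAt.continuousWithinAt
  · exact fun t _ => ((partialSum_hasDeriv hk t).differentiableAt).differentiableWithinAt
  · intro t ht
    rw [interior_Icc] at ht
    rw [(partialSum_hasDeriv hk t).deriv]
    have : 0 ≤ bern (n-1) k t := bern_nonneg ⟨le_of_lt ht.1, le_of_lt ht.2⟩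
    have hn : (0:ℝ) ≤ n := by positivity
    simp only [neg_nonpos]
    positivity

-- Abel summation
lemma abel_sum (u v : ℕ → ℝ) (K : ℕ) :
    ∑ k ∈ range (K + 1), u k * v k
      = (∑ k ∈ range K, (∑ j ∈ range (k+1), u j) * (v k - v (k+1)))
        + (∑ j ∈ range (K+1), u j) * v K := by
  induction K with
  | zero => simp
  | succ K ih =>
    rw [Finset.sum_range_succ (fun k => u k * v k), ih,
      Finset.sum_range_succ (fun k => (∑ j ∈ range (k+1), u j) * (v k - v (k+1))),
      Finset.sum_range_succ u (K+1)]
    ring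

lemma U_nonneg_of_le {n : ℕ} {a b : ℝ} (ha : a ∈ Set.Icc (0:ℝ) 1)
    (hb : b ∈ Set.Icc (0:ℝ) 1) (hab : a ≤ b) {k : ℕ} (hk : k < n) :
    0 ≤ ∑ j ∈ range (k+1), (bern n j a - bern n j b) := by
  rw [Finset.sum_sub_distrib, sub_nonneg]
  exact partialSum_antitone hk ha hb hab

lemma U_mul_nonneg {n : ℕ} {a b : ℝ} (ha : a ∈ Set.Icc (0:ℝ) 1) (hb : b ∈ Set.Icc (0:ℝ) 1)
    {k₁ k₂ : ℕ} (h1 : k₁ < n) (h2 : k₂ < n) :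
    0 ≤ (∑ j ∈ range (k₁+1), (bern n j a - bern n j b))
        * (∑ j ∈ range (k₂+1), (bern n j a - bern n j b)) := by
  rcases le_total a b with hab | hab
  · exact mul_nonneg (U_nonneg_of_le ha hb hab h1) (U_nonneg_of_le ha hb hab h2)
  · have e : ∀ k, (∑ j ∈ range (k+1), (bern n j a - bern n j b))
        = -(∑ j ∈ range (k+1), (bern n j b - bern n j a)) := fun k => by
      rw [← Finset.sum_neg_distrib]
      exact Finset.sum_congr rfl fun j _ => by ring
    rw [e k₁, e k₂, neg_mul_neg]
    exact mul_nonneg (U_nonneg_of_le hb ha hab h1) (U_nonneg_of_le hb ha hab h2)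

-- the core quadratic inequality
lemma core_quadratic {n : ℕ} (hn : 1 ≤ n) {a b : ℝ} (ha : a ∈ Set.Icc (0:ℝ) 1)
    (hb : b ∈ Set.Icc (0:ℝ) 1) (h : ℕ → ℝ)
    (hh : ∀ j, j + 2 ≤ 2*n → 2 * h (j+1) ≤ h j + h (j+2)) :
    0 ≤ ∑ k₁ ∈ range (n+1), ∑ k₂ ∈ range (n+1),
        (bern n k₁ a - bern n k₁ b) * (bern n k₂ a - bern n k₂ b) * h (k₁ + k₂) := by
  set u : ℕ → ℝ := fun k => bern n k a - bern n k b with hu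
  have hU0 : ∑ j ∈ range (n+1), u j = 0 := by
    rw [hu, Finset.sum_sub_distrib, bern_sum, bern_sum, sub_self]
  have abel0 : ∀ v : ℕ → ℝ, ∑ k ∈ range (n+1), u k * v k
      = ∑ k ∈ range n, (∑ j ∈ range (k+1), u j) * (v k - v (k+1)) := by
    intro v
    rw [abel_sum u v n, hU0, zero_mul, add_zero]
  have step1 : ∑ k₁ ∈ range (n+1), ∑ k₂ ∈ range (n+1), u k₁ * u k₂ * h (k₁ + k₂)
      = ∑ k₁ ∈ range n, (∑ j ∈ range (k₁+1), u j) *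
          (∑ k₂ ∈ range n, (∑ j ∈ range (k₂+1), u j) *
            ((h (k₁ + k₂) - h (k₁ + k₂ + 1)) - (h (k₁ + k₂ + 1) - h (k₁ + k₂ + 2)))) := by
    have inner : ∀ k₁, ∑ k₂ ∈ range (n+1), u k₁ * u k₂ * h (k₁ + k₂)
        = u k₁ * ∑ k₂ ∈ range (n+1), u k₂ * h (k₁ + k₂) := by
      intro k₁
      rw [Finset.mul_sum]
      exact Finset.sum_congr rfl fun k₂ _ => by ring
    calc ∑ k₁ ∈ range (n+1), ∑ k₂ ∈ range (n+1), u k₁ * u k₂ * h (k₁ + k₂)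
        = ∑ k₁ ∈ range (n+1), u k₁ * (∑ k₂ ∈ range (n+1), u k₂ * h (k₁ + k₂)) :=
          Finset.sum_congr rfl fun k₁ _ => inner k₁
      _ = ∑ k₁ ∈ range n, (∑ j ∈ range (k₁+1), u j) *
            ((∑ k₂ ∈ range (n+1), u k₂ * h (k₁ + k₂))
              - (∑ k₂ ∈ range (n+1), u k₂ * h (k₁ + 1 + k₂))) :=
          abel0 _
      _ = _ := by
          apply Finset.sum_congr rfl
          intro k₁ _
          congr 1
          rw [← Finset.sum_sub_distrib]
          have : ∀ k₂ ∈ range (n+1), u k₂ * h (k₁ + k₂) - u k₂ * h (k₁ + 1 + k₂)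
              = u k₂ * (h (k₁ + k₂) - h (k₁ + k₂ + 1)) := by
            intro k₂ _
            have e : k₁ + 1 + k₂ = k₁ + k₂ + 1 := by omega
            rw [e]; ring
          rw [Finset.sum_congr rfl this, abel0 (fun k₂ => h (k₁ + k₂) - h (k₁ + k₂ + 1))]
          apply Finset.sum_congr rfl
          intro k₂ _
          have e1 : k₁ + (k₂ + 1) = k₁ + k₂ + 1 := by omega
          rw [e1]
  rw [step1]
  apply Finset.sum_nonneg
  intro k₁ hk₁
  rw [Finset.mul_sum]
  apply Finset.sum_nonneg
  intro k₂ hk₂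
  rw [mem_range] at hk₁ hk₂
  have hUU := U_mul_nonneg ha hb hk₁ hk₂
  have hsd : 0 ≤ (h (k₁ + k₂) - h (k₁ + k₂ + 1)) - (h (k₁ + k₂ + 1) - h (k₁ + k₂ + 2)) := by
    have := hh (k₁ + k₂) (by omega)
    linarith
  calc (0:ℝ) ≤ ((∑ j ∈ range (k₁+1), u j) * (∑ j ∈ range (k₂+1), u j)) *
        ((h (k₁ + k₂) - h (k₁ + k₂ + 1)) - (h (k₁ + k₂ + 1) - h (k₁ + k₂ + 2))) :=
        mul_nonneg hUU hsd
    _ = _ := by ring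

-- convex sequence lemma
lemma convex_seq_lemma (u : ℕ → ℝ) (s : ℕ)
    (hu : ∀ k, k + 2 ≤ s → 2 * u (k+1) ≤ u k + u (k+2)) :
    (s:ℝ) * u 1 ≤ ((s:ℝ) - 1) * u 0 + u s := by
  rcases Nat.eq_zero_or_pos s with hs | hs
  · subst hs; push_cast; ring_nf; linarith
  have mono : ∀ k, k + 1 ≤ s → u 1 - u 0 ≤ u (k+1) - u k := by
    intro k
    induction k with
    | zero => intro _; norm_num
    | succ k ih =>
      intro hk
      have h1 := ih (by omega)
      have h2 := hu k (by omega)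
      linarith
  have tel : ∑ k ∈ range s, (u (k+1) - u k) = u s - u 0 := Finset.sum_range_sub u s
  have hsum : (s:ℝ) * (u 1 - u 0) ≤ u s - u 0 := by
    calc (s:ℝ) * (u 1 - u 0) = ∑ _k ∈ range s, (u 1 - u 0) := by
          rw [Finset.sum_const, card_range]; ring
      _ ≤ ∑ k ∈ range s, (u (k+1) - u k) := by
          apply Finset.sum_le_sum
          intro k hk
          exact mono k (by rw [mem_range] at hk; omega)
      _ = u s - u 0 := tel
  nlinarith [hsum]

def Ee (n : ℕ) (g : ℕ → ℝ) : List ℝ → ℕ → ℝ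
  | [], acc => g acc
  | y :: ys, acc => ∑ k ∈ range (n+1), bern n k y * Ee n g ys (acc + k)

lemma Ee_perm {n : ℕ} {g : ℕ → ℝ} {l₁ l₂ : List ℝ} (h : l₁.Perm l₂) :
    ∀ acc, Ee n g l₁ acc = Ee n g l₂ acc := by
  induction h with
  | nil => intro acc; rfl
  | cons x h ih =>
    intro acc
    simp only [Ee]
    exact Finset.sum_congr rfl fun k _ => by rw [ih (acc + k)]
  | swap x y l =>
    intro acc
    simp only [Ee, Finset.mul_sum]
    rw [Finset.sum_comm]
    apply Finset.sum_congr rfl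
    intro k _
    apply Finset.sum_congr rfl
    intro k' _
    rw [Nat.add_right_comm]
    ring
  | trans h₁ h₂ ih₁ ih₂ => intro acc; rw [ih₁ acc, ih₂ acc]

section EE
variable {n N : ℕ} {g : ℕ → ℝ}

-- second differences of Ee in acc
lemma Ee_secondDiff (hg : ∀ k, k + 2 ≤ N → 2 * g (k+1) ≤ g k + g (k+2))
    (ys : List ℝ) (hys : ∀ v ∈ ys, v ∈ Set.Icc (0:ℝ) 1) :
    ∀ acc, acc + 2 + n * ys.length ≤ N →
      2 * Ee n g ys (acc+1) ≤ Ee n g ys acc + Ee n g ys (acc+2) := by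
  induction ys with
  | nil => intro acc hacc; exact hg acc (by simpa using hacc)
  | cons y ys ih =>
    intro acc hacc
    simp only [Ee]
    rw [Finset.mul_sum, ← Finset.sum_add_distrib]
    apply Finset.sum_le_sum
    intro k hk
    rw [mem_range] at hk
    have hy : y ∈ Set.Icc (0:ℝ) 1 := hys y List.mem_cons_self
    have hb := bern_nonneg (n := n) (i := k) hy
    have hlen : (acc + k) + 2 + n * ys.length ≤ N := by
      simp only [List.length_cons] at hacc
      have : n * (ys.length + 1) = n * ys.length + n := by ring
      omega
    have h2 := ih (fun v hv => hys v (List.mem_cons_of_mem y hv)) (acc + k) hlen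
    have e1 : acc + 1 + k = acc + k + 1 := by omega
    have e2 : acc + 2 + k = acc + k + 2 := by omega
    rw [e1, e2]
    calc 2 * (bern n k y * Ee n g ys (acc + k + 1))
        = bern n k y * (2 * Ee n g ys (acc + k + 1)) := by ring
      _ ≤ bern n k y * (Ee n g ys (acc + k) + Ee n g ys (acc + k + 2)) :=
          mul_le_mul_of_nonneg_left h2 hb
      _ = bern n k y * Ee n g ys (acc + k) + bern n k y * Ee n g ys (acc + k + 2) := by ring

-- supermodularity
lemma Ee_supermod (hn : 1 ≤ n) (hg : ∀ k, k + 2 ≤ N → 2 * g (k+1) ≤ g k + g (k+2))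
    {a b : ℝ} (ha : a ∈ Set.Icc (0:ℝ) 1) (hb : b ∈ Set.Icc (0:ℝ) 1)
    (ws : List ℝ) (hws : ∀ v ∈ ws, v ∈ Set.Icc (0:ℝ) 1)
    (acc : ℕ) (hacc : acc + n * (ws.length + 2) ≤ N) :
    2 * Ee n g (a :: b :: ws) acc ≤ Ee n g (a :: a :: ws) acc + Ee n g (b :: b :: ws) acc := by
  have expand : ∀ s t : ℝ, Ee n g (s :: t :: ws) acc
      = ∑ k₁ ∈ range (n+1), ∑ k₂ ∈ range (n+1),
          bern n k₁ s * bern n k₂ t * Ee n g ws (acc + (k₁ + k₂)) := by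
    intro s t
    simp only [Ee, Finset.mul_sum]
    apply Finset.sum_congr rfl
    intro k₁ _
    apply Finset.sum_congr rfl
    intro k₂ _
    rw [← Nat.add_assoc]
    ring
  have hswap : Ee n g (a :: b :: ws) acc = Ee n g (b :: a :: ws) acc :=
    Ee_perm (List.Perm.swap b a ws) acc
  have key : 0 ≤ ∑ k₁ ∈ range (n+1), ∑ k₂ ∈ range (n+1),
      (bern n k₁ a - bern n k₁ b) * (bern n k₂ a - bern n k₂ b)
        * Ee n g ws (acc + (k₁ + k₂)) := by
    refine core_quadratic hn ha hb (fun j => Ee n g ws (acc + j)) ?_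
    intro j hj
    show 2 * Ee n g ws (acc + (j + 1)) ≤ Ee n g ws (acc + j) + Ee n g ws (acc + (j + 2))
    have e1 : acc + (j + 1) = acc + j + 1 := by omega
    have e2 : acc + (j + 2) = acc + j + 2 := by omega
    rw [e1, e2]
    apply Ee_secondDiff hg ws hws
    have : n * (ws.length + 2) = n * ws.length + 2 * n := by ring
    omega
  have iden : ∑ k₁ ∈ range (n+1), ∑ k₂ ∈ range (n+1),
      (bern n k₁ a - bern n k₁ b) * (bern n k₂ a - bern n k₂ b)
        * Ee n g ws (acc + (k₁ + k₂))
      = (Ee n g (a :: a :: ws) acc + Ee n g (b :: b :: ws) acc)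
        - (Ee n g (a :: b :: ws) acc + Ee n g (b :: a :: ws) acc) := by
    rw [expand a a, expand b b, expand a b, expand b a]
    rw [← Finset.sum_add_distrib, ← Finset.sum_add_distrib, ← Finset.sum_sub_distrib]
    apply Finset.sum_congr rfl
    intro k₁ _
    rw [← Finset.sum_add_distrib, ← Finset.sum_add_distrib, ← Finset.sum_sub_distrib]
    apply Finset.sum_congr rfl
    intro k₂ _
    ring
  rw [iden] at key
  linarith [hswap, key]

end EE

section Diag
variable {n N : ℕ} {g : ℕ → ℝ}

lemma Ee_diag (hn : 1 ≤ n) (hg : ∀ k, k + 2 ≤ N → 2 * g (k+1) ≤ g k + g (k+2)) :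
    ∀ (ys zs : List ℝ), (∀ v ∈ ys, v ∈ Set.Icc (0:ℝ) 1) →
      (∀ v ∈ zs, v ∈ Set.Icc (0:ℝ) 1) → n * (ys.length + zs.length) ≤ N →
      (ys.length : ℝ) * Ee n g (ys ++ zs) 0
        ≤ ((ys.map (fun a => Ee n g (List.replicate ys.length a ++ zs) 0)).sum) := by
  intro ys
  induction ys with
  | nil => intro zs _ _ _; simp
  | cons y ys' ih =>
    intro zs hys hzs hlen
    set s' := ys'.length with hs'
    set s := s' + 1 with hs
    have hy : y ∈ Set.Icc (0:ℝ) 1 := hys y List.mem_cons_self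
    have hyzs : ∀ v ∈ (y :: zs), v ∈ Set.Icc (0:ℝ) 1 := by
      intro v hv
      rcases List.mem_cons.mp hv with h | h
      · exact h ▸ hy
      · exact hzs v h
    set F : ℝ → ℝ := fun a => Ee n g (List.replicate s a ++ zs) 0 with hF
    -- Claim B
    have claimB : ∀ a ∈ ys', (s:ℝ) * Ee n g (List.replicate s' a ++ (y :: zs)) 0
        ≤ ((s:ℝ) - 1) * F a + F y := by
      intro a hamem
      have ha : a ∈ Set.Icc (0:ℝ) 1 := hys a (List.mem_cons_of_mem y hamem)
      set u : ℕ → ℝ := fun k =>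
        Ee n g (List.replicate k y ++ (List.replicate (s - k) a ++ zs)) 0 with hu
      have hconvseq : ∀ k, k + 2 ≤ s → 2 * u (k+1) ≤ u k + u (k+2) := by
        intro k hk
        obtain ⟨j, hj⟩ : ∃ j, s - k = j + 2 := ⟨s - k - 2, by omega⟩
        have hjk1 : s - (k+1) = j + 1 := by omega
        have hjk2 : s - (k+2) = j := by omega
        set ws : List ℝ := List.replicate k y ++ (List.replicate j a ++ zs) with hws
        have hwsmem : ∀ v ∈ ws, v ∈ Set.Icc (0:ℝ) 1 := by
          intro v hv
          rw [hws] at hv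
          rcases List.mem_append.mp hv with h | h
          · exact (List.eq_of_mem_replicate h) ▸ hy
          · rcases List.mem_append.mp h with h' | h'
            · exact (List.eq_of_mem_replicate h') ▸ ha
            · exact hzs v h'
        have hlws : ws.length = k + (j + zs.length) := by
          simp [hws]
        have hlen' : n * (s' + 1 + zs.length) ≤ N := by
          simpa [Nat.add_right_comm] using hlen
        have hacc : 0 + n * (ws.length + 2) ≤ N := by
          rw [Nat.zero_add, hlws]
          have h1 : k + (j + zs.length) + 2 = s' + 1 + zs.length := by omega
          rw [h1]
          exact hlen' 
        have hsm := Ee_supermod hn hg hy ha ws hwsmem 0 hacc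
        -- identify u values
        have e0 : u k = Ee n g (a :: a :: ws) 0 := by
          show Ee n g (List.replicate k y ++ (List.replicate (s - k) a ++ zs)) 0 = _
          rw [hj]
          apply Ee_perm
          have h2 : List.replicate (j+2) a ++ zs = a :: a :: (List.replicate j a ++ zs) := by
            simp [List.replicate_succ]
          rw [h2, hws]
          exact List.perm_middle.trans (List.Perm.cons a List.perm_middle)
        have e1 : u (k+1) = Ee n g (y :: a :: ws) 0 := by
          show Ee n g (List.replicate (k+1) y ++ (List.replicate (s - (k+1)) a ++ zs)) 0 = _
          rw [hjk1]
          apply Ee_perm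
          have : List.replicate (k+1) y = y :: List.replicate k y := List.replicate_succ
          rw [this]
          have : List.replicate (j+1) a ++ zs = a :: (List.replicate j a ++ zs) := by
            simp [List.replicate_succ]
          rw [this, hws]
          exact List.Perm.cons y List.perm_middle
        have e2 : u (k+2) = Ee n g (y :: y :: ws) 0 := by
          show Ee n g (List.replicate (k+2) y ++ (List.replicate (s - (k+2)) a ++ zs)) 0 = _
          rw [hjk2, hws]
          apply Ee_perm
          have : List.replicate (k+2) y = y :: y :: List.replicate k y := by
            simp [List.replicate_succ]
          rw [this]
          exact List.Perm.refl _
        rw [e0, e1, e2]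
        linarith [hsm]
      have hkey := convex_seq_lemma u s hconvseq
      have eu1 : u 1 = Ee n g (List.replicate s' a ++ (y :: zs)) 0 := by
        show Ee n g (List.replicate 1 y ++ (List.replicate (s - 1) a ++ zs)) 0 = _
        have hss : s - 1 = s' := by omega
        rw [hss]
        apply Ee_perm
        have : List.replicate 1 y ++ (List.replicate s' a ++ zs)
            = y :: (List.replicate s' a ++ zs) := by simp
        rw [this]
        exact List.perm_middle.symm
      have eu0 : u 0 = F a := by
        show Ee n g (List.replicate 0 y ++ (List.replicate (s - 0) a ++ zs)) 0 = _
        simp [hF]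
      have eus : u s = F y := by
        show Ee n g (List.replicate s y ++ (List.replicate (s - s) a ++ zs)) 0 = _
        simp [hF]
      rw [eu1, eu0, eus] at hkey
      exact hkey
    -- IH
    have hihlen : n * (ys'.length + (y :: zs).length) ≤ N := by
      simp only [List.length_cons] at hlen ⊢
      have : s' + (zs.length + 1) = s' + 1 + zs.length := by omega
      rw [this]
      exact hlen
    have hys' : ∀ v ∈ ys', v ∈ Set.Icc (0:ℝ) 1 := fun v hv => hys v (List.mem_cons_of_mem y hv)
    have hih := ih (y :: zs) hys' hyzs hihlen
    set T := Ee n g ((y :: ys') ++ zs) 0 with hT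
    have hpermT : Ee n g (ys' ++ (y :: zs)) 0 = T := by
      rw [hT]
      exact Ee_perm List.perm_middle 0
    rw [hpermT] at hih
    -- goal massage
    show (((y :: ys').length :ℕ):ℝ) * T ≤ ((y :: ys').map
      (fun a => Ee n g (List.replicate ((y :: ys').length) a ++ zs) 0)).sum
    have hlc : (y :: ys').length = s := by simp [hs, hs']
    rw [hlc]
    rw [List.map_cons, List.sum_cons]
    rcases Nat.eq_zero_or_pos s' with hz | hpos
    · have hnil : ys' = [] := List.length_eq_zero_iff.mp hz
      rw [hnil, List.map_nil, List.sum_nil, add_zero]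
      have hFT : Ee n g (List.replicate s y ++ zs) 0 = T := by
        rw [hT]
        have hs1 : s = 1 := by omega
        rw [hs1]
        congr 1
        rw [hnil]
        simp
      rw [hFT]
      have hs1 : s = 1 := by omega
      rw [hs1]
      norm_num
    · set Ssum := (ys'.map F).sum with hSsum
      -- sum claimB over ys'
      have hsum : (ys'.map (fun a => (s:ℝ) * Ee n g (List.replicate s' a ++ (y :: zs)) 0)).sum
          ≤ (ys'.map (fun a => ((s:ℝ) - 1) * F a + F y)).sum :=
        List.sum_le_sum claimB
      have hL : (ys'.map (fun a => (s:ℝ) * Ee n g (List.replicate s' a ++ (y :: zs)) 0)).sum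
          = (s:ℝ) * (ys'.map (fun a => Ee n g (List.replicate s' a ++ (y :: zs)) 0)).sum :=
        List.sum_map_mul_left _ _ _
      have hR : (ys'.map (fun a => ((s:ℝ) - 1) * F a + F y)).sum
          = ((s:ℝ) - 1) * Ssum + (s':ℝ) * F y := by
        rw [List.sum_map_add]
        congr 1
        · rw [hSsum]; exact List.sum_map_mul_left _ _ _
        · rw [List.map_const', List.sum_replicate, nsmul_eq_mul]
      have hchain : (s:ℝ) * ((s':ℝ) * T) ≤ ((s':ℝ)) * (F y + Ssum) := by
        have h1 : (s:ℝ) * ((s':ℝ) * T) ≤ (s:ℝ) *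
            (ys'.map (fun a => Ee n g (List.replicate s' a ++ (y :: zs)) 0)).sum := by
          apply mul_le_mul_of_nonneg_left hih (by positivity)
        rw [← hL] at h1
        have h2 := h1.trans (hsum.trans_eq hR)
        have : ((s:ℝ) - 1) = (s':ℝ) := by rw [hs]; push_cast; ring
        rw [this] at h2
        linarith [h2]
      have hs'pos : (0:ℝ) < (s':ℝ) := by exact_mod_cast hpos
      have : (s:ℝ) * T ≤ F y + Ssum := by
        have := hchain
        rw [show (s:ℝ) * ((s':ℝ) * T) = (s':ℝ) * ((s:ℝ) * T) by ring] at this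
        exact le_of_mul_le_mul_left this hs'pos
      exact this
end Diag

lemma sum_piFinset_succ {M n : ℕ} (F : (Fin (M+1) → ℕ) → ℝ) :
    ∑ i ∈ Fintype.piFinset (fun _ : Fin (M+1) => range (n+1)), F i
      = ∑ k ∈ range (n+1), ∑ i ∈ Fintype.piFinset (fun _ : Fin M => range (n+1)),
          F (Fin.cons k i) := by
  rw [← Finset.sum_product']
  apply Finset.sum_nbij' (fun i => (i 0, fun l => i l.succ)) (fun p => Fin.cons p.1 p.2)
  · intro i hi
    rw [Fintype.mem_piFinset] at hi
    rw [Finset.mem_product]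
    exact ⟨hi 0, by rw [Fintype.mem_piFinset]; exact fun l => hi l.succ⟩
  · intro p hp
    rw [Finset.mem_product] at hp
    rw [Fintype.mem_piFinset]
    intro l
    refine Fin.cases ?_ ?_ l
    · simpa using hp.1
    · intro l'
      rw [Fin.cons_succ]
      exact Fintype.mem_piFinset.mp hp.2 l'
  · intro i _
    exact Fin.cons_self_tail i
  · intro p _
    simp [Fin.tail]
  · intro i _
    exact congrArg F (Fin.cons_self_tail i).symm

lemma sum_pi_eq {n : ℕ} {g : ℕ → ℝ} : ∀ (M : ℕ) (y : Fin M → ℝ) (acc : ℕ),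
    ∑ i ∈ Fintype.piFinset (fun _ : Fin M => range (n+1)),
      (∏ l, bern n (i l) (y l)) * g (acc + ∑ l, i l)
    = Ee n g (List.ofFn y) acc := by
  intro M
  induction M with
  | zero =>
    intro y acc
    rw [List.ofFn_zero]
    have hsingle : Fintype.piFinset (fun _ : Fin 0 => range (n+1)) = {fun l => l.elim0} := by
      apply Finset.eq_singleton_iff_unique_mem.mpr
      constructor
      · rw [Fintype.mem_piFinset]; exact fun l => l.elim0
      · intro i _
        funext l
        exact l.elim0
    rw [hsingle, Finset.sum_singleton]
    simp [Ee]
  | succ M ih =>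
    intro y acc
    rw [sum_piFinset_succ]
    rw [List.ofFn_succ]
    show _ = ∑ k ∈ range (n+1), bern n k (y 0) * Ee n g (List.ofFn fun i => y i.succ) (acc + k)
    apply Finset.sum_congr rfl
    intro k _
    rw [← ih (fun l => y l.succ) (acc + k), Finset.mul_sum]
    apply Finset.sum_congr rfl
    intro i _
    rw [Fin.prod_univ_succ, Fin.sum_univ_succ]
    simp only [Fin.cons_zero, Fin.cons_succ]
    rw [← Nat.add_assoc]
    ring

/-- The `m`-variable generalization of Raşa's inequality. -/
theorem rasa_inequality_general (m n : ℕ) (hm : 2 ≤ m) (hn : 1 ≤ n)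
    (f : ℝ → ℝ) (hconv : ConvexOn ℝ (Set.Icc 0 1) f)
    (hcont : ContinuousOn f (Set.Icc 0 1))
    (x : Fin m → ℝ) (hx : ∀ j, x j ∈ Set.Icc (0:ℝ) 1) :
    0 ≤ ∑ i ∈ Fintype.piFinset (fun _ : Fin m => range (n + 1)),
        ((∑ j : Fin m, ∏ l : Fin m, bern n (i l) (x j))
            - m * ∏ l : Fin m, bern n (i l) (x l))
          * f ((∑ l : Fin m, (i l : ℝ)) / (m * n)) := by
  have hm0 : 0 < m := by omega
  have hn0 : 0 < n := hn
  have hc : (0:ℝ) < (m:ℝ) * (n:ℝ) := by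
    have h1 : (0:ℝ) < (m:ℝ) := by exact_mod_cast hm0
    have h2 : (0:ℝ) < (n:ℝ) := by exact_mod_cast hn0
    positivity
  set g : ℕ → ℝ := fun k => f ((k:ℝ) / ((m:ℝ) * (n:ℝ))) with hgdef
  -- convexity of g
  have hg : ∀ k, k + 2 ≤ m * n → 2 * g (k+1) ≤ g k + g (k+2) := by
    intro k hk
    have hkr : ((k:ℝ) + 2) ≤ (m:ℝ) * (n:ℝ) := by
      have : ((k + 2 : ℕ) : ℝ) ≤ ((m * n : ℕ) : ℝ) := by exact_mod_cast hk
      push_cast at this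
      linarith
    have hp : (k:ℝ) / ((m:ℝ)*(n:ℝ)) ∈ Set.Icc (0:ℝ) 1 := by
      constructor
      · positivity
      · rw [div_le_one hc]; linarith
    have hq : ((k:ℝ)+2) / ((m:ℝ)*(n:ℝ)) ∈ Set.Icc (0:ℝ) 1 := by
      constructor
      · positivity
      · rw [div_le_one hc]; linarith
    have hcv := hconv.2 hp hq (by norm_num : (0:ℝ) ≤ 1/2) (by norm_num : (0:ℝ) ≤ 1/2)
      (by norm_num)
    simp only [smul_eq_mul] at hcv
    have hmid : (1/2) * ((k:ℝ) / ((m:ℝ)*(n:ℝ))) + (1/2) * (((k:ℝ)+2) / ((m:ℝ)*(n:ℝ)))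
        = ((k:ℝ)+1) / ((m:ℝ)*(n:ℝ)) := by
      field_simp
      ring
    rw [hmid] at hcv
    have e1 : g (k+1) = f (((k:ℝ)+1) / ((m:ℝ)*(n:ℝ))) := by rw [hgdef]; push_cast; ring_nf
    have e2 : g k = f ((k:ℝ) / ((m:ℝ)*(n:ℝ))) := rfl
    have e3 : g (k+2) = f (((k:ℝ)+2) / ((m:ℝ)*(n:ℝ))) := by rw [hgdef]; push_cast; ring_nf
    rw [e1, e2, e3]
    linarith
  -- connection
  have key : ∀ (y : Fin m → ℝ),
      ∑ i ∈ Fintype.piFinset (fun _ : Fin m => range (n+1)),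
        (∏ l, bern n (i l) (y l)) * f ((∑ l : Fin m, (i l : ℝ)) / (m * n))
      = Ee n g (List.ofFn y) 0 := by
    intro y
    rw [← sum_pi_eq m y 0]
    apply Finset.sum_congr rfl
    intro i _
    congr 1
    rw [hgdef]
    simp only []
    congr 1
    push_cast
    ring
  -- split theorem sum
  have split : ∑ i ∈ Fintype.piFinset (fun _ : Fin m => range (n + 1)),
        ((∑ j : Fin m, ∏ l : Fin m, bern n (i l) (x j))
            - m * ∏ l : Fin m, bern n (i l) (x l))
          * f ((∑ l : Fin m, (i l : ℝ)) / (m * n))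
      = (∑ j : Fin m, Ee n g (List.ofFn (fun _ : Fin m => x j)) 0)
        - (m:ℝ) * Ee n g (List.ofFn x) 0 := by
    rw [← key x]
    have : ∀ j : Fin m, Ee n g (List.ofFn (fun _ : Fin m => x j)) 0
        = ∑ i ∈ Fintype.piFinset (fun _ : Fin m => range (n+1)),
            (∏ l, bern n (i l) (x j)) * f ((∑ l : Fin m, (i l : ℝ)) / (m * n)) :=
      fun j => (key (fun _ => x j)).symm
    rw [Finset.sum_congr rfl (fun j (_ : j ∈ univ) => this j)]
    rw [Finset.sum_comm, Finset.mul_sum, ← Finset.sum_sub_distrib]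
    apply Finset.sum_congr rfl
    intro i _
    rw [sub_mul, Finset.sum_mul]
    have hcomm : ∑ j : Fin m, (∏ l, bern n (i l) (x j)) * f ((∑ l : Fin m, (i l : ℝ)) / (m * n))
        = ∑ j : Fin m, f ((∑ l : Fin m, (i l : ℝ)) / (m * n)) * ∏ l, bern n (i l) (x j) :=
      Finset.sum_congr rfl fun j _ => mul_comm _ _
    rw [hcomm]
    ring
  rw [split]
  -- apply diag
  have hmem : ∀ v ∈ List.ofFn x, v ∈ Set.Icc (0:ℝ) 1 := by
    intro v hv
    rw [List.mem_ofFn] at hv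
    obtain ⟨j, rfl⟩ := hv
    exact hx j
  have hlen : n * ((List.ofFn x).length + ([] : List ℝ).length) ≤ m * n := by
    simp [List.length_ofFn, Nat.mul_comm]
  have hdiag := Ee_diag hn hg (List.ofFn x) [] hmem (by intro v hv; cases hv) hlen
  rw [List.append_nil, List.length_ofFn] at hdiag
  have hmap : ((List.ofFn x).map (fun a => Ee n g (List.replicate m a ++ []) 0)).sum
      = ∑ j : Fin m, Ee n g (List.ofFn (fun _ : Fin m => x j)) 0 := by
    rw [List.map_ofFn, List.sum_ofFn]
    apply Finset.sum_congr rfl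
    intro j _
    simp only [Function.comp]
    rw [List.append_nil, List.ofFn_const]
  rw [hmap] at hdiag
  linarith
end
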